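/- arXiv:1309.2542 — 3 statements merged into one kernel-verified Lean document; each statement's English description precedes it below -/
import Mathlib

section
/- The cubic element C₃ = Σ_{i,j,k,l,m} c_{ij}^k b_{im} b_{jl} ι(e_k) ι(e_l) ι(e_m) of U(g) is central: it commutes with ι(x) for every x ∈ g. (This is the purely even analogue of the paper's cubic Casimir element for an odd invariant form, with all signs from the Sign Rule equal to +1.) -/
open UniversalEnvelopingAlgebra

/-- The cubic element
`C₃ = ∑ i j k l m, (c i j k * binv i m * binv j l) • ι (e k) * ι (e l) * ι (e m)`
of the universal enveloping algebra is central: it commutes with `ι x` for every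
`x ∈ g`.  (Purely even analogue of the paper's cubic Casimir element.) -/
theorem cubic_casimir_central
    {d : ℕ} {g : Type*} [LieRing g] [LieAlgebra ℂ g]
    (B : g →ₗ[ℂ] g →ₗ[ℂ] ℂ)
    (hB_symm : ∀ x y : g, B x y = B y x)
    (hB_inv : ∀ x y z : g, B ⁅x, y⁆ z = B x ⁅y, z⁆)
    (hB_nondeg : ∀ x : g, (∀ y : g, B x y = 0) → x = 0)
    (e : Module.Basis (Fin d) ℂ g)
    (binv : Matrix (Fin d) (Fin d) ℂ)
    (h1 : (Matrix.of fun i j => B (e i) (e j)) * binv = 1)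
    (h2 : binv * (Matrix.of fun i j => B (e i) (e j)) = 1)
    (c : Fin d → Fin d → Fin d → ℂ)
    (hc : ∀ i j : Fin d, ⁅e i, e j⁆ = ∑ k : Fin d, c i j k • e k)
    (C₃ : UniversalEnvelopingAlgebra ℂ g)
    (hC₃ : C₃ = ∑ i : Fin d, ∑ j : Fin d, ∑ k : Fin d, ∑ l : Fin d, ∑ m : Fin d,
      (c i j k * binv i m * binv j l) • (ι ℂ (e k) * ι ℂ (e l) * ι ℂ (e m))) :
    ∀ x : g, ι ℂ x * C₃ = C₃ * ι ℂ x := by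
  intro x
  letI : LieRing (UniversalEnvelopingAlgebra ℂ g) := LieRing.ofAssociativeRing
  set F : Fin d → g := fun j => ∑ l, binv j l • e l with hFset
  have hFd : ∀ j, F j = ∑ l, binv j l • e l := fun _ => rfl
  -- ι maps sums to sums
  have ι_sum : ∀ (h : Fin d → g), ι ℂ (∑ n, h n) = ∑ n, ι ℂ (h n) := by
    intro h
    exact map_sum ((ι ℂ : g →ₗ⁅ℂ⁆ UniversalEnvelopingAlgebra ℂ g) :
      g →ₗ[ℂ] UniversalEnvelopingAlgebra ℂ g) h Finset.univ
  -- entries of the matrix identities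
  have h1' : ∀ k l : Fin d, (∑ n, B (e k) (e n) * binv n l) = if k = l then (1:ℂ) else 0 := by
    intro k l
    have h := congrFun (congrFun h1 k) l
    simpa [Matrix.mul_apply, Matrix.one_apply] using h
  have h2' : ∀ k l : Fin d, (∑ n, binv k n * B (e n) (e l)) = if k = l then (1:ℂ) else 0 := by
    intro k l
    have h := congrFun (congrFun h2 k) l
    simpa [Matrix.mul_apply, Matrix.one_apply] using h
  -- dual-basis expansions
  have hD1 : ∀ y : g, (∑ n, B (e n) y • F n) = y := by
    have key : (∑ n, (B (e n)).smulRight (F n)) = (LinearMap.id : g →ₗ[ℂ] g) := by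
      refine e.ext fun k => ?_
      simp only [LinearMap.sum_apply, LinearMap.smulRight_apply, LinearMap.id_apply]
      calc (∑ n, B (e n) (e k) • F n)
          = ∑ n, ∑ l, (B (e k) (e n) * binv n l) • e l := by
            refine Finset.sum_congr rfl fun n _ => ?_
            rw [hB_symm (e n) (e k), hFd, Finset.smul_sum]
            exact Finset.sum_congr rfl fun l _ => smul_smul _ _ _
        _ = ∑ l, (∑ n, B (e k) (e n) * binv n l) • e l := by
            rw [Finset.sum_comm]
            exact Finset.sum_congr rfl fun l _ => (Finset.sum_smul).symm
        _ = e k := by simp [h1', ite_smul]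
    intro y
    simpa using LinearMap.congr_fun key y
  have hD2 : ∀ y : g, (∑ n, B y (F n) • e n) = y := by
    have key : (∑ n, (B.flip (F n)).smulRight (e n)) = (LinearMap.id : g →ₗ[ℂ] g) := by
      refine e.ext fun k => ?_
      simp only [LinearMap.sum_apply, LinearMap.smulRight_apply, LinearMap.id_apply,
        LinearMap.flip_apply]
      calc (∑ n, B (e k) (F n) • e n)
          = ∑ n, (∑ l, binv n l * B (e l) (e k)) • e n := by
            refine Finset.sum_congr rfl fun n _ => ?_
            congr 1
            rw [hFd, map_sum]
            refine Finset.sum_congr rfl fun l _ => ?_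
            rw [map_smul, smul_eq_mul, hB_symm]
        _ = e k := by simp [h2', ite_smul]
    intro y
    simpa using LinearMap.congr_fun key y
  -- skew-symmetry of the invariant pairing coefficients
  have hskew : ∀ j n : Fin d, B ⁅x, e j⁆ (F n) + B (e j) ⁅x, F n⁆ = 0 := by
    intro j n
    have hB2 : B ⁅e j, x⁆ (F n) = B (e j) ⁅x, F n⁆ := hB_inv _ _ _
    have hsk : ⁅e j, x⁆ = -⁅x, e j⁆ := by rw [← lie_skew]
    rw [← hB2, hsk, map_neg, LinearMap.neg_apply, add_neg_cancel]
  -- key invariance lemma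
  have keyG : ∀ G : Fin d → Fin d → UniversalEnvelopingAlgebra ℂ g,
      (∑ j, ∑ n, B ⁅x, e j⁆ (F n) • G n j) + (∑ j, ∑ n, B (e n) ⁅x, F j⁆ • G j n) = 0 := by
    intro G
    have hswap : (∑ j, ∑ n, B (e n) ⁅x, F j⁆ • G j n)
        = ∑ j, ∑ n, B (e j) ⁅x, F n⁆ • G n j := Finset.sum_comm
    rw [hswap, ← Finset.sum_add_distrib]
    refine Finset.sum_eq_zero fun j _ => ?_
    rw [← Finset.sum_add_distrib]
    refine Finset.sum_eq_zero fun n _ => ?_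
    rw [← add_smul, hskew, zero_smul]
  -- rewriting C₃
  have hC₃' : C₃ = ∑ i, ∑ j, ι ℂ ⁅e i, e j⁆ * ι ℂ (F j) * ι ℂ (F i) := by
    rw [hC₃]
    refine Finset.sum_congr rfl fun i _ => Finset.sum_congr rfl fun j _ => ?_
    have key : ∀ (u v w : Fin d → ℂ),
        (∑ k, u k • ι ℂ (e k)) * (∑ l, v l • ι ℂ (e l)) * (∑ m, w m • ι ℂ (e m))
        = ∑ k, ∑ l, ∑ m,
            (u k * v l * w m) • (ι ℂ (e k) * ι ℂ (e l) * ι ℂ (e m)) := by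
      intro u v w
      rw [Finset.sum_mul_sum, Finset.sum_mul]
      refine Finset.sum_congr rfl fun k _ => ?_
      rw [Finset.sum_mul]
      refine Finset.sum_congr rfl fun l _ => ?_
      rw [Finset.mul_sum]
      refine Finset.sum_congr rfl fun m _ => ?_
      simp only [smul_mul_assoc, mul_smul_comm, smul_smul]
      congr 1
      ring
    conv_rhs => rw [hc i j, hFd j, hFd i]
    conv_rhs => rw [ι_sum, ι_sum, ι_sum]
    simp only [map_smul]
    rw [key]
    refine Finset.sum_congr rfl fun k _ => Finset.sum_congr rfl fun l _ =>
      Finset.sum_congr rfl fun m _ => ?_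
    congr 1
    ring
  -- commutator of ι's
  have hcomm : ∀ y : g, ι ℂ x * ι ℂ y - ι ℂ y * ι ℂ x = ι ℂ ⁅x, y⁆ := by
    intro y
    rw [LieHom.map_lie, Ring.lie_def]
  -- sums through brackets
  have lie_sum' : ∀ (w : g) (h : Fin d → g), ⁅w, ∑ n, h n⁆ = ∑ n, ⁅w, h n⁆ := by
    intro w h
    exact map_sum (LieAlgebra.ad ℂ g w) h Finset.univ
  have sum_lie' : ∀ (w : g) (h : Fin d → g), ⁅∑ n, h n, w⁆ = ∑ n, ⁅h n, w⁆ := by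
    intro w h
    calc ⁅∑ n, h n, w⁆ = -⁅w, ∑ n, h n⁆ := (lie_skew (∑ n, h n) w).symm
      _ = ∑ n, -⁅w, h n⁆ := by rw [lie_sum']; rw [Finset.sum_neg_distrib]
      _ = ∑ n, ⁅h n, w⁆ := Finset.sum_congr rfl fun n _ => lie_skew (h n) w
  -- expansion of a single commutator
  have expand : ∀ i j : Fin d,
      ι ℂ x * (ι ℂ ⁅e i, e j⁆ * ι ℂ (F j) * ι ℂ (F i))
        - ι ℂ ⁅e i, e j⁆ * ι ℂ (F j) * ι ℂ (F i) * ι ℂ x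
      = (ι ℂ ⁅⁅x, e i⁆, e j⁆ * ι ℂ (F j) * ι ℂ (F i)
          + ι ℂ ⁅e i, e j⁆ * ι ℂ (F j) * ι ℂ ⁅x, F i⁆)
        + (ι ℂ ⁅e i, ⁅x, e j⁆⁆ * ι ℂ (F j) + ι ℂ ⁅e i, e j⁆ * ι ℂ ⁅x, F j⁆) * ι ℂ (F i) := by
    intro i j
    have hsum : ι ℂ ⁅⁅x, e i⁆, e j⁆
        = (ι ℂ x * ι ℂ ⁅e i, e j⁆ - ι ℂ ⁅e i, e j⁆ * ι ℂ x) - ι ℂ ⁅e i, ⁅x, e j⁆⁆ := by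
      rw [eq_sub_iff_add_eq, ← map_add, ← leibniz_lie]
      exact (hcomm _).symm
    rw [hsum, ← hcomm (F i), ← hcomm (F j)]
    noncomm_ring
  -- first cancellation (inner index)
  have H1 : ∀ i : Fin d,
      (∑ j, (ι ℂ ⁅e i, ⁅x, e j⁆⁆ * ι ℂ (F j) + ι ℂ ⁅e i, e j⁆ * ι ℂ ⁅x, F j⁆)) = 0 := by
    intro i
    have eA : ∀ j, ι ℂ ⁅e i, ⁅x, e j⁆⁆ * ι ℂ (F j)
        = ∑ n, B ⁅x, e j⁆ (F n) • (ι ℂ ⁅e i, e n⁆ * ι ℂ (F j)) := by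
      intro j
      conv_lhs => rw [← hD2 ⁅x, e j⁆]
      rw [lie_sum', ι_sum, Finset.sum_mul]
      refine Finset.sum_congr rfl fun n _ => ?_
      rw [lie_smul, map_smul, smul_mul_assoc]
    have eB : ∀ j, ι ℂ ⁅e i, e j⁆ * ι ℂ ⁅x, F j⁆
        = ∑ n, B (e n) ⁅x, F j⁆ • (ι ℂ ⁅e i, e j⁆ * ι ℂ (F n)) := by
      intro j
      conv_lhs => rw [← hD1 ⁅x, F j⁆]
      rw [ι_sum, Finset.mul_sum]
      refine Finset.sum_congr rfl fun n _ => ?_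
      rw [map_smul, mul_smul_comm]
    simp only [eA, eB]
    rw [Finset.sum_add_distrib]
    exact keyG fun n j => ι ℂ ⁅e i, e n⁆ * ι ℂ (F j)
  -- second cancellation (outer index)
  have eC : ∀ i : Fin d, (∑ j, ι ℂ ⁅⁅x, e i⁆, e j⁆ * ι ℂ (F j) * ι ℂ (F i))
      = ∑ n, B ⁅x, e i⁆ (F n) • ((∑ j, ι ℂ ⁅e n, e j⁆ * ι ℂ (F j)) * ι ℂ (F i)) := by
    intro i
    have e1 : ∀ j, ι ℂ ⁅⁅x, e i⁆, e j⁆ * ι ℂ (F j) * ι ℂ (F i)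
        = ∑ n, B ⁅x, e i⁆ (F n) • (ι ℂ ⁅e n, e j⁆ * ι ℂ (F j) * ι ℂ (F i)) := by
      intro j
      conv_lhs => rw [← hD2 ⁅x, e i⁆]
      rw [sum_lie', ι_sum, Finset.sum_mul, Finset.sum_mul]
      refine Finset.sum_congr rfl fun n _ => ?_
      rw [smul_lie, map_smul, smul_mul_assoc, smul_mul_assoc]
    simp only [e1]
    rw [Finset.sum_comm]
    refine Finset.sum_congr rfl fun n _ => ?_
    rw [Finset.sum_mul, Finset.smul_sum]
  have eD : ∀ i : Fin d, (∑ j, ι ℂ ⁅e i, e j⁆ * ι ℂ (F j) * ι ℂ ⁅x, F i⁆)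
      = ∑ n, B (e n) ⁅x, F i⁆ • ((∑ j, ι ℂ ⁅e i, e j⁆ * ι ℂ (F j)) * ι ℂ (F n)) := by
    intro i
    rw [← Finset.sum_mul]
    conv_lhs => rw [← hD1 ⁅x, F i⁆]
    rw [ι_sum, Finset.mul_sum]
    refine Finset.sum_congr rfl fun n _ => ?_
    rw [map_smul, mul_smul_comm]
  have H2 : (∑ i, ∑ j, ι ℂ ⁅⁅x, e i⁆, e j⁆ * ι ℂ (F j) * ι ℂ (F i))
      + (∑ i, ∑ j, ι ℂ ⁅e i, e j⁆ * ι ℂ (F j) * ι ℂ ⁅x, F i⁆) = 0 := by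
    simp only [eC, eD]
    exact keyG fun n i => (∑ j, ι ℂ ⁅e n, e j⁆ * ι ℂ (F j)) * ι ℂ (F i)
  -- final assembly
  rw [← sub_eq_zero, hC₃']
  rw [Finset.mul_sum, Finset.sum_mul, ← Finset.sum_sub_distrib]
  have step : ∀ i : Fin d,
      (ι ℂ x * ∑ j, ι ℂ ⁅e i, e j⁆ * ι ℂ (F j) * ι ℂ (F i))
        - (∑ j, ι ℂ ⁅e i, e j⁆ * ι ℂ (F j) * ι ℂ (F i)) * ι ℂ x
      = ∑ j, (ι ℂ x * (ι ℂ ⁅e i, e j⁆ * ι ℂ (F j) * ι ℂ (F i))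
          - ι ℂ ⁅e i, e j⁆ * ι ℂ (F j) * ι ℂ (F i) * ι ℂ x) := by
    intro i
    rw [Finset.mul_sum, Finset.sum_mul, ← Finset.sum_sub_distrib]
  simp only [step, expand, Finset.sum_add_distrib]
  have hQ2 : ∀ i : Fin d,
      (∑ j, (ι ℂ ⁅e i, ⁅x, e j⁆⁆ * ι ℂ (F j) + ι ℂ ⁅e i, e j⁆ * ι ℂ ⁅x, F j⁆) * ι ℂ (F i)) = 0 := by
    intro i
    rw [← Finset.sum_mul, H1 i, zero_mul]
  rw [Finset.sum_eq_zero fun i _ => hQ2 i, add_zero]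
  exact H2
end

section
/- For every x ∈ g and every n ∈ ℤ, the element Σ_{i,j} b_{ij} ι(t^{−n} ⊗ e_i) ι(t^{n} ⊗ e_j) of U(g^{(1)}) commutes with ι(1 ⊗ x) (here 1 = t^0). -/
open TensorProduct LaurentPolynomial UniversalEnvelopingAlgebra

/-- The loop algebra `ℂ[t,t⁻¹] ⊗[ℂ] g` is a complex Lie algebra (the Lie bracket of
the base change is in particular ℂ-bilinear). -/
noncomputable instance loopLieAlgebra {g : Type*} [LieRing g] [LieAlgebra ℂ g] :
    LieAlgebra ℂ (LaurentPolynomial ℂ ⊗[ℂ] g) where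
  lie_smul c x y :=
    calc ⁅x, c • y⁆ = ⁅x, (algebraMap ℂ (LaurentPolynomial ℂ) c) • y⁆ := by
          rw [algebraMap_smul]
      _ = (algebraMap ℂ (LaurentPolynomial ℂ) c) • ⁅x, y⁆ := LieAlgebra.lie_smul _ _ _
      _ = c • ⁅x, y⁆ := algebraMap_smul _ _ _

attribute [local instance] LieRing.ofAssociativeRing

set_option maxHeartbeats 1000000 in
/-- For every `x ∈ g` and every `n ∈ ℤ`, the element
`∑ i j, binv i j • ι(t⁻ⁿ ⊗ eᵢ) ι(tⁿ ⊗ eⱼ)` of the universal enveloping algebra of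
the loop algebra `g⁽¹⁾` commutes with `ι(t⁰ ⊗ x)`. -/
theorem loop_casimir_summand_commutes
    {d : ℕ} {g : Type*} [LieRing g] [LieAlgebra ℂ g]
    (B : g →ₗ[ℂ] g →ₗ[ℂ] ℂ)
    (hB_symm : ∀ x y : g, B x y = B y x)
    (hB_inv : ∀ x y z : g, B ⁅x, y⁆ z = B x ⁅y, z⁆)
    (hB_nondeg : ∀ x : g, (∀ y : g, B x y = 0) → x = 0)
    (e : Module.Basis (Fin d) ℂ g)
    (binv : Matrix (Fin d) (Fin d) ℂ)
    (h1 : (Matrix.of fun i j => B (e i) (e j)) * binv = 1)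
    (h2 : binv * (Matrix.of fun i j => B (e i) (e j)) = 1) :
    ∀ (x : g) (n : ℤ),
      ι ℂ ((T 0 : LaurentPolynomial ℂ) ⊗ₜ[ℂ] x) *
          (∑ i : Fin d, ∑ j : Fin d, binv i j •
            (ι ℂ ((T (-n) : LaurentPolynomial ℂ) ⊗ₜ[ℂ] e i) *
             ι ℂ ((T n : LaurentPolynomial ℂ) ⊗ₜ[ℂ] e j)))
        = (∑ i : Fin d, ∑ j : Fin d, binv i j •
            (ι ℂ ((T (-n) : LaurentPolynomial ℂ) ⊗ₜ[ℂ] e i) *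
             ι ℂ ((T n : LaurentPolynomial ℂ) ⊗ₜ[ℂ] e j))) *
          ι ℂ ((T 0 : LaurentPolynomial ℂ) ⊗ₜ[ℂ] x) := by
  intro x n
  set A : Matrix (Fin d) (Fin d) ℂ := Matrix.of fun i j => B (e i) (e j) with hA
  -- coordinate matrix of ad x on the basis
  set R : Matrix (Fin d) (Fin d) ℂ := Matrix.of fun i k => e.repr ⁅x, e i⁆ k with hR
  have hrepr : ∀ i : Fin d, ⁅x, e i⁆ = ∑ k : Fin d, R i k • e k := by
    intro i
    conv_lhs => rw [← e.sum_repr ⁅x, e i⁆]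
    rfl
  -- invariance of B: R * A + A * Rᵀ = 0
  have hRA : R * A + A * R.transpose = 0 := by
    ext i j
    have key : B ⁅x, e i⁆ (e j) + B (e i) ⁅x, e j⁆ = 0 := by
      have h3 : B (e i) ⁅x, e j⁆ = B ⁅x, e j⁆ (e i) := hB_symm _ _
      rw [hB_inv, h3, hB_inv, ← lie_skew (e i) (e j), map_neg]
      ring
    have e1 : B ⁅x, e i⁆ (e j) = ∑ k : Fin d, R i k * A k j := by
      rw [hrepr i, map_sum, LinearMap.sum_apply]
      refine Finset.sum_congr rfl fun k _ => ?_
      rw [map_smul, LinearMap.smul_apply, smul_eq_mul]; rfl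
    have e2 : B (e i) ⁅x, e j⁆ = ∑ k : Fin d, A i k * R.transpose k j := by
      rw [hrepr j, map_sum]
      refine Finset.sum_congr rfl fun k _ => ?_
      rw [map_smul, smul_eq_mul, mul_comm]; rfl
    have : (R * A + A * R.transpose) i j = B ⁅x, e i⁆ (e j) + B (e i) ⁅x, e j⁆ := by
      simp [Matrix.add_apply, Matrix.mul_apply, e1, e2]
    rw [this, key]; rfl
  -- hence binv * R + Rᵀ * binv = 0
  have hbR : binv * R + R.transpose * binv = 0 := by
    have hra : R * A = -(A * R.transpose) := eq_neg_of_add_eq_zero_left hRA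
    have key : binv * R = -(R.transpose * binv) := by
      calc binv * R = binv * R * (A * binv) := by rw [h1, mul_one]
        _ = binv * (R * A) * binv := by noncomm_ring
        _ = binv * (-(A * R.transpose)) * binv := by rw [hra]
        _ = -((binv * A) * (R.transpose * binv)) := by noncomm_ring
        _ = -(R.transpose * binv) := by rw [h2, one_mul]
    rw [key]; exact neg_add_cancel _
  -- entrywise scalar identity
  have hscal : ∀ p q : Fin d,
      (∑ i : Fin d, R i p * binv i q) + (∑ j : Fin d, binv p j * R j q) = 0 := by
    intro p q
    have h := congrFun (congrFun hbR p) q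
    simpa [Matrix.add_apply, Matrix.mul_apply, Matrix.transpose_apply, add_comm,
      mul_comm] using h
  -- abbreviations in the enveloping algebra
  set a : Fin d → UniversalEnvelopingAlgebra ℂ (LaurentPolynomial ℂ ⊗[ℂ] g) :=
    fun i => ι ℂ ((T (-n) : LaurentPolynomial ℂ) ⊗ₜ[ℂ] e i) with ha
  set b : Fin d → UniversalEnvelopingAlgebra ℂ (LaurentPolynomial ℂ ⊗[ℂ] g) :=
    fun j => ι ℂ ((T n : LaurentPolynomial ℂ) ⊗ₜ[ℂ] e j) with hb
  set x0 : UniversalEnvelopingAlgebra ℂ (LaurentPolynomial ℂ ⊗[ℂ] g) :=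
    ι ℂ ((T 0 : LaurentPolynomial ℂ) ⊗ₜ[ℂ] x) with hx0
  -- commutator with x0 is given by the loop bracket
  have hcomm : ∀ (m : ℤ) (y : g),
      x0 * ι ℂ ((T m : LaurentPolynomial ℂ) ⊗ₜ[ℂ] y)
        - ι ℂ ((T m : LaurentPolynomial ℂ) ⊗ₜ[ℂ] y) * x0
      = ι ℂ ((T m : LaurentPolynomial ℂ) ⊗ₜ[ℂ] ⁅x, y⁆) := by
    intro m y
    have h := (ι ℂ (L := LaurentPolynomial ℂ ⊗[ℂ] g)).map_lie
      ((T 0 : LaurentPolynomial ℂ) ⊗ₜ[ℂ] x) ((T m : LaurentPolynomial ℂ) ⊗ₜ[ℂ] y)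
    rw [Ring.lie_def] at h
    rw [hx0, ← h]
    congr 1
    show ((T 0 : LaurentPolynomial ℂ) * T m) ⊗ₜ[ℂ] ⁅x, y⁆ = _
    rw [← T_add, zero_add]
  -- expanding brackets in coordinates
  have hexp : ∀ (m : ℤ) (i : Fin d),
      ι ℂ ((T m : LaurentPolynomial ℂ) ⊗ₜ[ℂ] ⁅x, e i⁆)
        = ∑ k : Fin d, R i k • ι ℂ ((T m : LaurentPolynomial ℂ) ⊗ₜ[ℂ] e k) := by
    intro m i
    show (ι ℂ).toLinearMap _ = _
    rw [hrepr i, tmul_sum, map_sum]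
    exact Finset.sum_congr rfl fun k _ => by
      rw [tmul_smul, map_smul]; rfl
  rw [← sub_eq_zero]
  have step1 :
      x0 * (∑ i : Fin d, ∑ j : Fin d, binv i j • (a i * b j))
        - (∑ i : Fin d, ∑ j : Fin d, binv i j • (a i * b j)) * x0
      = ∑ i : Fin d, ∑ j : Fin d,
          binv i j • (x0 * (a i * b j) - (a i * b j) * x0) := by
    rw [Finset.mul_sum, Finset.sum_mul, ← Finset.sum_sub_distrib]
    refine Finset.sum_congr rfl fun i _ => ?_
    rw [Finset.mul_sum, Finset.sum_mul, ← Finset.sum_sub_distrib]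
    refine Finset.sum_congr rfl fun j _ => ?_
    rw [mul_smul_comm, smul_mul_assoc, smul_sub]
  have step2 : ∀ i j : Fin d,
      x0 * (a i * b j) - (a i * b j) * x0
        = (∑ p : Fin d, R i p • (a p * b j)) + (∑ q : Fin d, R j q • (a i * b q)) := by
    intro i j
    have key : x0 * (a i * b j) - (a i * b j) * x0
        = (x0 * a i - a i * x0) * b j + a i * (x0 * b j - b j * x0) := by noncomm_ring
    rw [key, hcomm (-n) (e i), hcomm n (e j), hexp, hexp, Finset.sum_mul, Finset.mul_sum]
    congr 1
    · exact Finset.sum_congr rfl fun p _ => smul_mul_assoc _ _ _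
    · exact Finset.sum_congr rfl fun q _ => mul_smul_comm _ _ _
  rw [step1]
  calc ∑ i : Fin d, ∑ j : Fin d, binv i j • (x0 * (a i * b j) - (a i * b j) * x0)
      = (∑ i : Fin d, ∑ j : Fin d, ∑ p : Fin d, (binv i j * R i p) • (a p * b j))
        + (∑ i : Fin d, ∑ j : Fin d, ∑ q : Fin d, (binv i j * R j q) • (a i * b q)) := by
        rw [← Finset.sum_add_distrib]
        refine Finset.sum_congr rfl fun i _ => ?_
        rw [← Finset.sum_add_distrib]
        refine Finset.sum_congr rfl fun j _ => ?_
        rw [step2 i j, smul_add, Finset.smul_sum, Finset.smul_sum]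
        simp only [smul_smul]
    _ = (∑ p : Fin d, ∑ q : Fin d, (∑ i : Fin d, R i p * binv i q) • (a p * b q))
        + (∑ p : Fin d, ∑ q : Fin d, (∑ j : Fin d, binv p j * R j q) • (a p * b q)) := by
        congr 1
        · -- ∑ i ∑ j ∑ p → ∑ p ∑ j(=q) ∑ i
          rw [Finset.sum_comm]
          rw [show (∑ j : Fin d, ∑ i : Fin d, ∑ p : Fin d,
              (binv i j * R i p) • (a p * b j))
            = ∑ j : Fin d, ∑ p : Fin d, ∑ i : Fin d,
              (binv i j * R i p) • (a p * b j) from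
            Finset.sum_congr rfl fun j _ => Finset.sum_comm]
          rw [Finset.sum_comm]
          refine Finset.sum_congr rfl fun p _ => Finset.sum_congr rfl fun q _ => ?_
          rw [Finset.sum_smul]
          exact Finset.sum_congr rfl fun i _ => by rw [mul_comm]
        · -- per outer index swap j and q
          refine Finset.sum_congr rfl fun p _ => ?_
          rw [Finset.sum_comm]
          refine Finset.sum_congr rfl fun q _ => ?_
          rw [Finset.sum_smul]
    _ = ∑ p : Fin d, ∑ q : Fin d,
          ((∑ i : Fin d, R i p * binv i q) + (∑ j : Fin d, binv p j * R j q)) •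
            (a p * b q) := by
        rw [← Finset.sum_add_distrib]
        refine Finset.sum_congr rfl fun p _ => ?_
        rw [← Finset.sum_add_distrib]
        exact Finset.sum_congr rfl fun q _ => (add_smul _ _ _).symm
    _ = 0 := by
        refine Finset.sum_eq_zero fun p _ => Finset.sum_eq_zero fun q _ => ?_
        rw [hscal p q, zero_smul]
end

section
/- For all integers m ≥ 1 and N ≥ m and every index k, the following identity holds in U(g^{(1)}): [ι(t^m ⊗ e_k), Σ_{n=1}^{N} Σ_{i,j} b_{ij} ι(t^{−n} ⊗ e_i) ι(t^{n} ⊗ e_j)] = Σ_{n=1}^{m} Σ_{i,j} b_{ij} ι(t^{m−n} ⊗ [e_k, e_i]) ι(t^{n} ⊗ e_j) + Σ_{n=N+1}^{N+m} Σ_{i,j} b_{ij} ι(t^{m−n} ⊗ e_i) ι(t^{n} ⊗ [e_k, e_j]), where [·,·] on the left is the commutator in U(g^{(1)}). (This is the finite truncation of the paper's computation bringing the quadratic Casimir of the Kac–Moody algebra to Wick normal form.) -/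
open TensorProduct LaurentPolynomial UniversalEnvelopingAlgebra
open Matrix

lemma mat_key {d : ℕ} (A b F : Matrix (Fin d) (Fin d) ℂ)
    (h1 : A * b = 1) (h2 : b * A = 1) (hF : Fᵀ * A = -(A * F)) :
    F * b = -(b * Fᵀ) := by
  have hF' : A * F = -(Fᵀ * A) := by rw [hF, neg_neg]
  have step : F * b = b * (A * F) * b := by
    rw [← Matrix.mul_assoc, h2, Matrix.one_mul]
  rw [step, hF', Matrix.mul_neg, Matrix.neg_mul, ← Matrix.mul_assoc,
    Matrix.mul_assoc (b * Fᵀ) A b, h1, Matrix.mul_one]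

lemma casimir_key {d : ℕ} {g : Type*} [LieRing g] [LieAlgebra ℂ g]
    {M : Type*} [AddCommGroup M] [Module ℂ M]
    (B : g →ₗ[ℂ] g →ₗ[ℂ] ℂ)
    (hB_inv : ∀ x y z : g, B ⁅x, y⁆ z = B x ⁅y, z⁆)
    (e : Module.Basis (Fin d) ℂ g)
    (binv : Matrix (Fin d) (Fin d) ℂ)
    (h1 : (Matrix.of fun i j => B (e i) (e j)) * binv = 1)
    (h2 : binv * (Matrix.of fun i j => B (e i) (e j)) = 1)
    (φ : g →ₗ[ℂ] g →ₗ[ℂ] M) (k : Fin d) :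
    ∑ i : Fin d, ∑ j : Fin d, binv i j • φ ⁅e k, e i⁆ (e j)
      = - ∑ i : Fin d, ∑ j : Fin d, binv i j • φ (e i) ⁅e k, e j⁆ := by
  classical
  set A : Matrix (Fin d) (Fin d) ℂ := Matrix.of fun i j => B (e i) (e j) with hA
  set F : Matrix (Fin d) (Fin d) ℂ := Matrix.of (fun a i => e.repr ⁅e k, e i⁆ a) with hF
  have expand : ∀ (L : g →ₗ[ℂ] ℂ) (x : g), (∑ a : Fin d, e.repr x a * L (e a)) = L x := by
    intro L x
    calc ∑ a : Fin d, e.repr x a * L (e a) = ∑ a : Fin d, L (e.repr x a • e a) := by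
          simp [smul_eq_mul]
      _ = L (∑ a : Fin d, e.repr x a • e a) := (map_sum L _ _).symm
      _ = L x := by rw [e.sum_repr]
  have hskew : ∀ i c : Fin d, B ⁅e k, e i⁆ (e c) = - B (e i) ⁅e k, e c⁆ := by
    intro i c
    rw [← lie_skew (e k) (e i), map_neg, LinearMap.neg_apply, hB_inv]
  have hFA : Fᵀ * A = -(A * F) := by
    ext i c
    rw [Matrix.mul_apply, Matrix.neg_apply, Matrix.mul_apply]
    have l1 : ∑ a : Fin d, Fᵀ i a * A a c = B ⁅e k, e i⁆ (e c) := by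
      calc ∑ a : Fin d, Fᵀ i a * A a c
          = ∑ a : Fin d, e.repr ⁅e k, e i⁆ a * (B.flip (e c)) (e a) := by
            simp [hF, hA, Matrix.transpose_apply]
        _ = B.flip (e c) ⁅e k, e i⁆ := expand _ _
        _ = B ⁅e k, e i⁆ (e c) := rfl
    have l2 : ∑ a : Fin d, A i a * F a c = B (e i) ⁅e k, e c⁆ := by
      calc ∑ a : Fin d, A i a * F a c
          = ∑ a : Fin d, e.repr ⁅e k, e c⁆ a * (B (e i)) (e a) := by
            refine Finset.sum_congr rfl fun a _ => ?_
            simp [hF, hA, mul_comm]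
        _ = B (e i) ⁅e k, e c⁆ := expand _ _
    rw [l1, l2, hskew]
  have swap3 : ∀ (X : Fin d → Fin d → Fin d → M),
      (∑ i : Fin d, ∑ j : Fin d, ∑ a : Fin d, X i j a)
        = ∑ a : Fin d, ∑ j : Fin d, ∑ i : Fin d, X i j a := by
    intro X
    calc (∑ i : Fin d, ∑ j : Fin d, ∑ a : Fin d, X i j a)
        = ∑ j : Fin d, ∑ i : Fin d, ∑ a : Fin d, X i j a := Finset.sum_comm
      _ = ∑ j : Fin d, ∑ a : Fin d, ∑ i : Fin d, X i j a :=
          Finset.sum_congr rfl fun j _ => Finset.sum_comm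
      _ = ∑ a : Fin d, ∑ j : Fin d, ∑ i : Fin d, X i j a := Finset.sum_comm
  have hL : (∑ i : Fin d, ∑ j : Fin d, binv i j • φ ⁅e k, e i⁆ (e j))
      = ∑ a : Fin d, ∑ j : Fin d, (F * binv) a j • φ (e a) (e j) := by
    calc ∑ i : Fin d, ∑ j : Fin d, binv i j • φ ⁅e k, e i⁆ (e j)
        = ∑ i : Fin d, ∑ j : Fin d, ∑ a : Fin d, (F a i * binv i j) • φ (e a) (e j) := by
          refine Finset.sum_congr rfl fun i _ => Finset.sum_congr rfl fun j _ => ?_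
          rw [show ⁅e k, e i⁆ = ∑ a : Fin d, F a i • e a from (e.sum_repr _).symm]
          rw [map_sum, LinearMap.sum_apply, Finset.smul_sum]
          refine Finset.sum_congr rfl fun a _ => ?_
          rw [_root_.map_smul, LinearMap.smul_apply, smul_smul, mul_comm (binv i j)]
      _ = ∑ a : Fin d, ∑ j : Fin d, ∑ i : Fin d, (F a i * binv i j) • φ (e a) (e j) := swap3 _
      _ = ∑ a : Fin d, ∑ j : Fin d, (F * binv) a j • φ (e a) (e j) := by
          refine Finset.sum_congr rfl fun a _ => Finset.sum_congr rfl fun j _ => ?_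
          rw [Matrix.mul_apply, Finset.sum_smul]
  have hR : (∑ i : Fin d, ∑ j : Fin d, binv i j • φ (e i) ⁅e k, e j⁆)
      = ∑ i : Fin d, ∑ b : Fin d, (binv * Fᵀ) i b • φ (e i) (e b) := by
    refine Finset.sum_congr rfl fun i _ => ?_
    calc ∑ j : Fin d, binv i j • φ (e i) ⁅e k, e j⁆
        = ∑ j : Fin d, ∑ b : Fin d, (binv i j * F b j) • φ (e i) (e b) := by
          refine Finset.sum_congr rfl fun j _ => ?_
          rw [show ⁅e k, e j⁆ = ∑ b : Fin d, F b j • e b from (e.sum_repr _).symm]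
          rw [map_sum, Finset.smul_sum]
          refine Finset.sum_congr rfl fun b _ => ?_
          rw [_root_.map_smul, smul_smul]
      _ = ∑ b : Fin d, ∑ j : Fin d, (binv i j * F b j) • φ (e i) (e b) := Finset.sum_comm
      _ = ∑ b : Fin d, (binv * Fᵀ) i b • φ (e i) (e b) := by
          refine Finset.sum_congr rfl fun b _ => ?_
          rw [Matrix.mul_apply, Finset.sum_smul]
          simp [Matrix.transpose_apply]
  rw [hL, hR, mat_key A binv F h1 h2 hFA]
  simp [Matrix.neg_apply, neg_smul, Finset.sum_neg_distrib]

noncomputable def pairMul {g : Type*} [LieRing g] [LieAlgebra ℂ g] (p q : ℤ) :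
    g →ₗ[ℂ] g →ₗ[ℂ] UniversalEnvelopingAlgebra ℂ (LaurentPolynomial ℂ ⊗[ℂ] g) :=
  LinearMap.mk₂ ℂ
    (fun a b => ι ℂ ((T p : LaurentPolynomial ℂ) ⊗ₜ[ℂ] a) *
                ι ℂ ((T q : LaurentPolynomial ℂ) ⊗ₜ[ℂ] b))
    (fun a a' b => by rw [TensorProduct.tmul_add, map_add, add_mul])
    (fun c a b => by rw [TensorProduct.tmul_smul, map_smul, smul_mul_assoc])
    (fun a b b' => by rw [TensorProduct.tmul_add, map_add, mul_add])
    (fun c a b => by rw [TensorProduct.tmul_smul, map_smul, mul_smul_comm])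


lemma abstract_resum {U : Type*} [AddCommGroup U] (f h : ℕ → U) (m N : ℕ)
    (hN : m ≤ N)
    (hc : ∀ n, m < n → n ≤ N → f n = - h n) :
    ∑ n ∈ Finset.Icc 1 N, (f n + h (n + m))
      = ∑ n ∈ Finset.Icc 1 m, f n + ∑ n ∈ Finset.Icc (N + 1) (N + m), h n := by
  have e1 : Finset.Icc 1 N = Finset.Ioc 0 N := by
    ext x; simp [Finset.mem_Icc, Finset.mem_Ioc]; omega
  have e2 : Finset.Icc 1 m = Finset.Ioc 0 m := by
    ext x; simp [Finset.mem_Icc, Finset.mem_Ioc]; omega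
  have e3 : Finset.Icc (N + 1) (N + m) = Finset.Ioc N (N + m) := by
    ext x; simp [Finset.mem_Icc, Finset.mem_Ioc]
  have e4 : Finset.Icc (1 + m) (N + m) = Finset.Ioc m (N + m) := by
    ext x; simp [Finset.mem_Icc, Finset.mem_Ioc]; omega
  have shift : ∑ n ∈ Finset.Icc 1 N, h (n + m) = ∑ n ∈ Finset.Icc (1 + m) (N + m), h n := by
    rw [← Finset.map_add_right_Icc, Finset.sum_map]
    rfl
  rw [Finset.sum_add_distrib, shift, e1, e2, e3, e4,
    ← Finset.sum_Ioc_consecutive f (Nat.zero_le m) hN,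
    ← Finset.sum_Ioc_consecutive h hN (Nat.le_add_right N m)]
  have hz : ∑ n ∈ Finset.Ioc m N, f n = - ∑ n ∈ Finset.Ioc m N, h n := by
    rw [← Finset.sum_neg_distrib]
    exact Finset.sum_congr rfl fun n hn =>
      hc n (Finset.mem_Ioc.mp hn).1 (Finset.mem_Ioc.mp hn).2
  rw [hz]; abel

attribute [local instance 100] LieRing.ofAssociativeRing

/-- Finite truncation of the Wick-normal-form computation: for
`1 ≤ m ≤ N` and any basis index `k`, in `U(g⁽¹⁾)` the commutator of `ι(tᵐ ⊗ e_k)`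
with `∑_{n=1}^{N} ∑_{i,j} binv i j • ι(t⁻ⁿ ⊗ eᵢ) ι(tⁿ ⊗ eⱼ)` equals
`∑_{n=1}^{m} ∑_{i,j} binv i j • ι(t^{m-n} ⊗ [e_k, eᵢ]) ι(tⁿ ⊗ eⱼ)
 + ∑_{n=N+1}^{N+m} ∑_{i,j} binv i j • ι(t^{m-n} ⊗ eᵢ) ι(tⁿ ⊗ [e_k, eⱼ])`. -/
theorem loop_casimir_truncated_commutator
    {d : ℕ} {g : Type*} [LieRing g] [LieAlgebra ℂ g]
    (B : g →ₗ[ℂ] g →ₗ[ℂ] ℂ)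
    (hB_symm : ∀ x y : g, B x y = B y x)
    (hB_inv : ∀ x y z : g, B ⁅x, y⁆ z = B x ⁅y, z⁆)
    (hB_nondeg : ∀ x : g, (∀ y : g, B x y = 0) → x = 0)
    (e : Module.Basis (Fin d) ℂ g)
    (binv : Matrix (Fin d) (Fin d) ℂ)
    (h1 : (Matrix.of fun i j => B (e i) (e j)) * binv = 1)
    (h2 : binv * (Matrix.of fun i j => B (e i) (e j)) = 1)
    (m N : ℕ) (hm : 1 ≤ m) (hN : m ≤ N) (k : Fin d) :
    ι ℂ ((T (m : ℤ) : LaurentPolynomial ℂ) ⊗ₜ[ℂ] e k) *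
        (∑ n ∈ Finset.Icc 1 N, ∑ i : Fin d, ∑ j : Fin d, binv i j •
          (ι ℂ ((T (-(n : ℤ)) : LaurentPolynomial ℂ) ⊗ₜ[ℂ] e i) *
           ι ℂ ((T (n : ℤ) : LaurentPolynomial ℂ) ⊗ₜ[ℂ] e j))) -
      (∑ n ∈ Finset.Icc 1 N, ∑ i : Fin d, ∑ j : Fin d, binv i j •
        (ι ℂ ((T (-(n : ℤ)) : LaurentPolynomial ℂ) ⊗ₜ[ℂ] e i) *
         ι ℂ ((T (n : ℤ) : LaurentPolynomial ℂ) ⊗ₜ[ℂ] e j))) *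
        ι ℂ ((T (m : ℤ) : LaurentPolynomial ℂ) ⊗ₜ[ℂ] e k)
      = ∑ n ∈ Finset.Icc 1 m, ∑ i : Fin d, ∑ j : Fin d, binv i j •
          (ι ℂ ((T ((m : ℤ) - (n : ℤ)) : LaurentPolynomial ℂ) ⊗ₜ[ℂ] ⁅e k, e i⁆) *
           ι ℂ ((T (n : ℤ) : LaurentPolynomial ℂ) ⊗ₜ[ℂ] e j)) +
        ∑ n ∈ Finset.Icc (N + 1) (N + m), ∑ i : Fin d, ∑ j : Fin d, binv i j •
          (ι ℂ ((T ((m : ℤ) - (n : ℤ)) : LaurentPolynomial ℂ) ⊗ₜ[ℂ] e i) *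
           ι ℂ ((T (n : ℤ) : LaurentPolynomial ℂ) ⊗ₜ[ℂ] ⁅e k, e j⁆)) := by
  classical
  have comm : ∀ (p q : ℤ) (a b : g),
      ι ℂ ((T p : LaurentPolynomial ℂ) ⊗ₜ[ℂ] a) * ι ℂ ((T q : LaurentPolynomial ℂ) ⊗ₜ[ℂ] b)
        - ι ℂ ((T q : LaurentPolynomial ℂ) ⊗ₜ[ℂ] b) * ι ℂ ((T p : LaurentPolynomial ℂ) ⊗ₜ[ℂ] a)
        = ι ℂ ((T (p + q) : LaurentPolynomial ℂ) ⊗ₜ[ℂ] ⁅a, b⁆) := by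
    intro p q a b
    rw [T_add, ← Ring.lie_def, ← LieHom.map_lie]
    rfl
  have fh : ∀ p q : ℤ,
      (∑ i : Fin d, ∑ j : Fin d, binv i j •
        (ι ℂ ((T p : LaurentPolynomial ℂ) ⊗ₜ[ℂ] ⁅e k, e i⁆) *
         ι ℂ ((T q : LaurentPolynomial ℂ) ⊗ₜ[ℂ] e j)))
      = - ∑ i : Fin d, ∑ j : Fin d, binv i j •
        (ι ℂ ((T p : LaurentPolynomial ℂ) ⊗ₜ[ℂ] e i) *
         ι ℂ ((T q : LaurentPolynomial ℂ) ⊗ₜ[ℂ] ⁅e k, e j⁆)) := by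
    intro p q
    simpa [pairMul, LinearMap.mk₂_apply] using
      casimir_key B hB_inv e binv h1 h2 (pairMul p q) k
  have main := abstract_resum
    (f := fun n : ℕ => ∑ i : Fin d, ∑ j : Fin d, binv i j •
      (ι ℂ ((T ((m : ℤ) - (n : ℤ)) : LaurentPolynomial ℂ) ⊗ₜ[ℂ] ⁅e k, e i⁆) *
       ι ℂ ((T ((n : ℤ)) : LaurentPolynomial ℂ) ⊗ₜ[ℂ] e j)))
    (h := fun n : ℕ => ∑ i : Fin d, ∑ j : Fin d, binv i j •
      (ι ℂ ((T ((m : ℤ) - (n : ℤ)) : LaurentPolynomial ℂ) ⊗ₜ[ℂ] e i) *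
       ι ℂ ((T ((n : ℤ)) : LaurentPolynomial ℂ) ⊗ₜ[ℂ] ⁅e k, e j⁆)))
    m N hN (fun n _ _ => fh ((m : ℤ) - (n : ℤ)) (n : ℤ))
  refine Eq.trans ?_ main
  rw [Finset.mul_sum, Finset.sum_mul, ← Finset.sum_sub_distrib]
  refine Finset.sum_congr rfl fun n hn => ?_
  have c2 : (m : ℤ) - ((n + m : ℕ) : ℤ) = -(n : ℤ) := by push_cast; ring
  have c3 : ((n + m : ℕ) : ℤ) = (m : ℤ) + (n : ℤ) := by push_cast; ring
  simp only [c2, c3]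
  rw [Finset.mul_sum, Finset.sum_mul, ← Finset.sum_sub_distrib, ← Finset.sum_add_distrib]
  refine Finset.sum_congr rfl fun i _ => ?_
  rw [Finset.mul_sum, Finset.sum_mul, ← Finset.sum_sub_distrib, ← Finset.sum_add_distrib]
  refine Finset.sum_congr rfl fun j _ => ?_
  rw [mul_smul_comm, smul_mul_assoc, ← smul_sub, ← smul_add]
  congr 1
  have k1 := comm (m : ℤ) (-(n : ℤ)) (e k) (e i)
  have k2 := comm (m : ℤ) ((n : ℤ)) (e k) (e j)
  have e1 : (m : ℤ) + -(n : ℤ) = (m : ℤ) - (n : ℤ) := by ring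
  rw [e1] at k1
  rw [← k1, ← k2]
  noncomm_ring
end
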